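/- arXiv:1910.04291 — 2 statements merged into one kernel-verified Lean document; each statement's English description precedes it below -/
import Mathlib

section
/- Let S = ⋃_{i∈J} [a_i, a_{i+1}] be a union of some of the intervals of a partition −∞ = a_{−r−1} < a_{−r} < ⋯ < a_{r'+1} < a_{r'+2} = ∞ of ℝ, with c ≥ 0 satisfying a_{−r} ≤ −c and a_{r'+1} ≥ c. Define S̃ = (−∞, a_{−r}] ∪ (⋃_{i ∈ J ∩ {−r,…,r'}} [a_i, a_{i+1}]) ∪ [a_{r'+1}, ∞). Then for φ ∼ N(0, τ²), Pr(|φ| ≥ c | φ ∈ S̃) ≥ Pr(|φ| ≥ c | φ ∈ S), provided Pr(φ ∈ S) > 0. -/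
open MeasureTheory ProbabilityTheory
open scoped NNReal ENNReal

lemma ennreal_cond_aux {A B E : ℝ≥0∞} (hAB : A ≤ B) (hB0 : B ≠ 0) (hB : B ≠ ∞)
    (hE : E ≠ ∞) : B⁻¹ * A ≤ (B + E)⁻¹ * (A + E) := by
  have hBE0 : B + E ≠ 0 := (lt_of_lt_of_le (pos_iff_ne_zero.mpr hB0) le_self_add).ne'
  have hBEt : B + E ≠ ∞ := ENNReal.add_ne_top.mpr ⟨hB, hE⟩
  have key : A * (B + E) ≤ (A + E) * B := by
    rw [mul_add, add_mul, mul_comm E B]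
    exact add_le_add le_rfl (mul_le_mul_left hAB E)
  rw [← ENNReal.div_eq_inv_mul, ← ENNReal.div_eq_inv_mul,
    ENNReal.div_le_iff_le_mul (Or.inl hB0) (Or.inl hB),
    div_eq_mul_inv, mul_right_comm, ← div_eq_mul_inv,
    ENNReal.le_div_iff_mul_le (Or.inl hBE0) (Or.inl hBEt)]
  exact key

/-- Proposition 4: early stopping yields a conservative p-value.
`S` is a union of intervals of the partition `-∞ = a₋ᵣ₋₁ < a₋ᵣ < ⋯ < a_{r'+1} < a_{r'+2} = ∞`
indexed by `J`, with `a₋ᵣ ≤ -c` and `a_{r'+1} ≥ c`; `S̃` replaces the unexplored tails by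
full half-lines. Then `Pr(|φ| ≥ c ∣ φ ∈ S̃) ≥ Pr(|φ| ≥ c ∣ φ ∈ S)` for `φ ~ N(0, τ²)`. -/
theorem early_stopping_conservative (τ : ℝ≥0) (hτ : τ ≠ 0) (r r' : ℕ) (a : ℤ → ℝ)
    (ha : StrictMonoOn a (Set.Icc (-(r : ℤ)) ((r' : ℤ) + 1)))
    (c : ℝ) (hc : 0 ≤ c) (hlo : a (-(r : ℤ)) ≤ -c) (hhi : c ≤ a ((r' : ℤ) + 1))
    (J : Set ℤ) (hJ : J ⊆ Set.Icc (-(r : ℤ) - 1) ((r' : ℤ) + 1))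
    (S Stilde : Set ℝ)
    (hS : S = ⋃ i ∈ J,
      (if i < -(r : ℤ) then Set.Iic (a (-(r : ℤ)))
       else if (r' : ℤ) < i then Set.Ici (a ((r' : ℤ) + 1))
       else Set.Icc (a i) (a (i + 1))))
    (hSt : Stilde = Set.Iic (a (-(r : ℤ))) ∪
        (⋃ i ∈ J ∩ Set.Icc (-(r : ℤ)) (r' : ℤ), Set.Icc (a i) (a (i + 1))) ∪
        Set.Ici (a ((r' : ℤ) + 1)))
    (hpos : gaussianReal 0 (τ ^ 2) S ≠ 0) :
    (ProbabilityTheory.cond (gaussianReal 0 (τ ^ 2)) S) {x | c ≤ |x|}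
      ≤ (ProbabilityTheory.cond (gaussianReal 0 (τ ^ 2)) Stilde) {x | c ≤ |x|} := by
  set μ := gaussianReal 0 (τ ^ 2) with hμ
  set T : Set ℝ := {x | c ≤ |x|} with hT
  -- measurability
  have hSm : MeasurableSet S := by
    rw [hS]
    refine MeasurableSet.biUnion (Set.to_countable J) fun i _ => ?_
    split_ifs
    · exact measurableSet_Iic
    · exact measurableSet_Ici
    · exact measurableSet_Icc
  have hStm : MeasurableSet Stilde := by
    rw [hSt]
    exact ((measurableSet_Iic.union
      (MeasurableSet.biUnion (Set.to_countable _) fun i _ => measurableSet_Icc)).union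
      measurableSet_Ici)
  -- S ⊆ Stilde
  have hsub : S ⊆ Stilde := by
    rw [hS, hSt]
    intro x hx
    simp only [Set.mem_iUnion, exists_prop] at hx
    obtain ⟨i, hiJ, hx⟩ := hx
    by_cases h1 : i < -(r : ℤ)
    · rw [if_pos h1] at hx
      exact Or.inl (Or.inl hx)
    · by_cases h2 : (r' : ℤ) < i
      · rw [if_neg h1, if_pos h2] at hx
        exact Or.inr hx
      · rw [if_neg h1, if_neg h2] at hx
        refine Or.inl (Or.inr ?_)
        simp only [Set.mem_iUnion, exists_prop]
        exact ⟨i, ⟨hiJ, not_lt.mp h1, not_lt.mp h2⟩, hx⟩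
  -- Stilde \ S ⊆ T
  have hdiff : Stilde \ S ⊆ T := by
    rintro x ⟨hxSt, hxS⟩
    rw [hSt] at hxSt
    rcases hxSt with (hx | hx) | hx
    · have : c ≤ -x := by linarith [Set.mem_Iic.mp hx]
      exact le_trans this (neg_le_abs x)
    · exfalso
      apply hxS
      simp only [Set.mem_iUnion, exists_prop] at hx
      obtain ⟨i, ⟨hiJ, hi1, hi2⟩, hx⟩ := hx
      rw [hS]
      simp only [Set.mem_iUnion, exists_prop]
      exact ⟨i, hiJ, by rw [if_neg (not_lt.mpr hi1), if_neg (not_lt.mpr hi2)]; exact hx⟩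
    · exact le_trans (le_trans hhi (Set.mem_Ici.mp hx)) (le_abs_self x)
  -- measure arithmetic
  have hTm : MeasurableSet T := (isClosed_le continuous_const continuous_abs).measurableSet
  have hdm : MeasurableSet (Stilde \ S) := hStm.diff hSm
  have hSt_split : μ Stilde = μ S + μ (Stilde \ S) := by
    rw [← measure_union (Set.disjoint_sdiff_right) hdm, Set.union_diff_cancel hsub]
  have hStT_split : μ (Stilde ∩ T) = μ (S ∩ T) + μ (Stilde \ S) := by
    have : Stilde ∩ T = (S ∩ T) ∪ (Stilde \ S) := by
      apply Set.Subset.antisymm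
      · rintro x ⟨hx1, hx2⟩
        by_cases h : x ∈ S
        · exact Or.inl ⟨h, hx2⟩
        · exact Or.inr ⟨hx1, h⟩
      · rintro x (⟨hx1, hx2⟩ | hx)
        · exact ⟨hsub hx1, hx2⟩
        · exact ⟨hx.1, hdiff hx⟩
    rw [this, measure_union _ hdm]
    exact Disjoint.mono_left Set.inter_subset_left Set.disjoint_sdiff_right
  rw [cond_apply hSm, cond_apply hStm, hSt_split, hStT_split]
  exact ennreal_cond_aux (measure_mono Set.inter_subset_left) hpos (measure_ne_top μ S)
    (measure_ne_top μ _)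
end

section
/- Fix changepoints 0 = τ̂₀ < τ̂₁ < ⋯ < τ̂_K < τ̂_{K+1} = T, data y ∈ ℝ^T, λ ≥ 0, and the contrast ν from equation (5). Define C(φ) = min over u₀,…,u_K ∈ ℝ of ½ Σ_{k=0}^{K} Σ_{t=τ̂_k+1}^{τ̂_{k+1}} (y'_t(φ) − u_k)² + λK, where y'(φ) = y − ν(ν^⊤y)/‖ν‖² + νφ/‖ν‖². Then C is a constant function of φ. -/
/-- The cost of segmenting `z` with changepoints fixed at `tau 1 < ⋯ < tau K`
(1-indexed timepoints; segment `k` is `(tau k, tau (k+1)]`):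
`C = min over u₀,…,u_K of ½ Σₖ Σ_{t=τ̂ₖ+1}^{τ̂ₖ₊₁} (z_t − u_k)² + λK`. -/
noncomputable def restrictedCost (K : ℕ) (tau : ℕ → ℕ) (lam : ℝ) (z : ℕ → ℝ) : ℝ :=
  ⨅ u : ℕ → ℝ,
    ((1 / 2) * ∑ k ∈ Finset.range (K + 1),
        ∑ t ∈ Finset.Ioc (tau k) (tau (k + 1)), (z t - u k) ^ 2 + lam * K)

/-- The perturbed data `y'(φ) = y − ν(ν⊤y)/‖ν‖² + νφ/‖ν‖²` (1-indexed, length `T`). -/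
noncomputable def yPerturb (T : ℕ) (y ν : ℕ → ℝ) (φ : ℝ) : ℕ → ℝ := fun t =>
  y t - ((∑ r ∈ Finset.Icc 1 T, ν r * y r) / (∑ r ∈ Finset.Icc 1 T, (ν r) ^ 2)) * ν t
    + (φ / (∑ r ∈ Finset.Icc 1 T, (ν r) ^ 2)) * ν t

/-- If `z` and `w` differ by a constant `c k` on each segment, the restricted costs agree. -/
lemma restrictedCost_shift (K : ℕ) (tau : ℕ → ℕ) (lam : ℝ) (z w : ℕ → ℝ) (c : ℕ → ℝ)
    (h : ∀ k ≤ K, ∀ t ∈ Finset.Ioc (tau k) (tau (k + 1)), z t = w t + c k) :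
    restrictedCost K tau lam z = restrictedCost K tau lam w := by
  unfold restrictedCost
  have hsurj : Function.Surjective (fun u : ℕ → ℝ => fun k => u k + c k) := by
    intro v
    exact ⟨fun k => v k - c k, by funext k; ring⟩
  rw [← hsurj.iInf_comp]
  refine iInf_congr fun u => ?_
  congr 1
  congr 1
  refine Finset.sum_congr rfl fun k hk => ?_
  refine Finset.sum_congr rfl fun t ht => ?_
  rw [h k (Nat.lt_succ_iff.mp (Finset.mem_range.mp hk)) t ht]
  ring

/-- Proposition 5: the restricted segmentation cost `C(φ)` of the
perturbed data `y'(φ)`, with changepoints fixed at `τ̂₁,…,τ̂_K` and `ν` the contrast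
of equation (5), is a constant function of `φ`. -/
theorem restrictedCost_const (T K : ℕ) (tau : ℕ → ℕ) (j : ℕ)
    (hj1 : 1 ≤ j) (hjK : j ≤ K)
    (h0 : tau 0 = 0) (hT : tau (K + 1) = T) (hmono : ∀ k ≤ K, tau k < tau (k + 1))
    (lam : ℝ) (hlam : 0 ≤ lam) (y ν : ℕ → ℝ)
    (hν : ∀ t, ν t =
      if t ≤ tau (j - 1) then 0
      else if t ≤ tau j then 1 / ((tau j : ℝ) - tau (j - 1))
      else if t ≤ tau (j + 1) then -(1 / ((tau (j + 1) : ℝ) - tau j))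
      else 0)
    (φ φ' : ℝ) :
    restrictedCost K tau lam (yPerturb T y ν φ)
      = restrictedCost K tau lam (yPerturb T y ν φ') := by
  -- monotonicity of tau on [0, K+1]
  have hle : ∀ a b, a ≤ b → b ≤ K + 1 → tau a ≤ tau b := by
    intro a b hab hb
    induction b with
    | zero =>
      have : a = 0 := Nat.le_zero.mp hab
      subst this; exact le_rfl
    | succ n ih =>
      rcases Nat.lt_or_ge a (n + 1) with h | h
      · exact (ih (by omega) (by omega)).trans (hmono n (by omega)).le
      · have : a = n + 1 := by omega
        subst this; exact le_rfl
  -- key iff on segments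
  have key : ∀ m ≤ K + 1, ∀ k ≤ K, ∀ t ∈ Finset.Ioc (tau k) (tau (k + 1)),
      ((t ≤ tau m) ↔ (tau (k + 1) ≤ tau m)) := by
    intro m hm k hk t ht
    rw [Finset.mem_Ioc] at ht
    constructor
    · intro htm
      rcases le_or_gt m k with h | h
      · exact absurd ((hle m k h (by omega)).trans_lt ht.1) (by omega)
      · exact hle (k + 1) m h hm
    · intro h; exact ht.2.trans h
  -- ν is constant on each segment
  have νconst : ∀ k ≤ K, ∀ t ∈ Finset.Ioc (tau k) (tau (k + 1)), ν t = ν (tau (k + 1)) := by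
    intro k hk t ht
    rw [hν t, hν (tau (k + 1))]
    have h1 := key (j - 1) (by omega) k hk t ht
    have h2 := key j (by omega) k hk t ht
    have h3 := key (j + 1) (by omega) k hk t ht
    simp only [h1, h2, h3]
  set S := ∑ r ∈ Finset.Icc 1 T, (ν r) ^ 2 with hS
  apply restrictedCost_shift K tau lam _ _ (fun k => ((φ - φ') / S) * ν (tau (k + 1)))
  intro k hk t ht
  have := νconst k hk t ht
  simp only [yPerturb, ← hS, this]
  ring
end
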